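/- arXiv:2104.12931 — 2 statements merged into one kernel-verified Lean document; each statement's English description precedes it below -/
import Mathlib

section
/- Let A, B be positive definite n×n complex matrices with A ≤ B in the Loewner order. Then for all a, b ∈ (0,1] and all t ∈ [0,1], in the Loewner order, T_{(1−t)a + tb}(A|B) ≤ (1−t)·T_a(A|B) + t·T_b(A|B). -/
open Matrix ComplexOrder

/-- Real power of a (Hermitian) matrix via the continuous functional calculus. -/
noncomputable def mrpow {n : ℕ} (A : Matrix (Fin n) (Fin n) ℂ) (t : ℝ) :
    Matrix (Fin n) (Fin n) ℂ :=
  cfc (fun x : ℝ => x ^ t) A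

/-- The weighted geometric mean `A ♯_t B = A^{1/2} (A^{-1/2} B A^{-1/2})^t A^{1/2}`. -/
noncomputable def geomMean {n : ℕ} (A B : Matrix (Fin n) (Fin n) ℂ) (t : ℝ) :
    Matrix (Fin n) (Fin n) ℂ :=
  mrpow A (1 / 2) * mrpow (mrpow A (-(1 / 2)) * B * mrpow A (-(1 / 2))) t * mrpow A (1 / 2)

/-- The Tsallis relative operator entropy `T_s(A|B) = (A ♯_s B - A)/s`. -/
noncomputable def tsallis {n : ℕ} (A B : Matrix (Fin n) (Fin n) ℂ) (s : ℝ) :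
    Matrix (Fin n) (Fin n) ℂ :=
  s⁻¹ • (geomMean A B s - A)

namespace Stmt15Aux

variable {n : ℕ}

lemma contOn {A : Matrix (Fin n) (Fin n) ℂ} (h : ∀ x ∈ spectrum ℝ A, 0 < x) (r : ℝ) :
    ContinuousOn (fun x : ℝ => x ^ r) (spectrum ℝ A) := fun x hx =>
  (Real.continuousAt_rpow_const x r (Or.inl (h x hx).ne')).continuousWithinAt

lemma cfc_posSemidef {C : Matrix (Fin n) (Fin n) ℂ} (hC : C.IsHermitian)
    (f : ℝ → ℝ) (hf : ∀ x ∈ spectrum ℝ C, 0 ≤ f x) : (cfc f C).PosSemidef := by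
  rw [hC.cfc_eq]
  unfold Matrix.IsHermitian.cfc
  rw [Unitary.conjStarAlgAut_apply, Matrix.star_eq_conjTranspose]
  refine Matrix.PosSemidef.mul_mul_conjTranspose_same ?_ _
  rw [Matrix.posSemidef_diagonal_iff]
  intro i
  have := hf _ (hC.eigenvalues_mem_spectrum_real i)
  simpa using this

lemma one_le_spectrum {C : Matrix (Fin n) (Fin n) ℂ} (h1 : (C - 1).PosSemidef) :
    ∀ x ∈ spectrum ℝ C, 1 ≤ x := by
  intro x hx
  have hmem : x - 1 ∈ spectrum ℝ (C - 1) := by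
    have h := spectrum.sub_singleton_eq C (1 : ℝ)
    rw [_root_.map_one] at h
    rw [← h]
    exact Set.sub_mem_sub hx rfl
  rw [h1.1.spectrum_real_eq_range_eigenvalues] at hmem
  obtain ⟨i, hi⟩ := hmem
  have := h1.eigenvalues_nonneg i
  rw [hi] at this
  linarith

lemma spectrum_pos {A : Matrix (Fin n) (Fin n) ℂ} (hA : A.PosDef) :
    ∀ x ∈ spectrum ℝ A, 0 < x := by
  intro x hx
  rw [hA.1.spectrum_real_eq_range_eigenvalues] at hx
  obtain ⟨i, rfl⟩ := hx
  exact hA.eigenvalues_pos i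

variable {A : Matrix (Fin n) (Fin n) ℂ}

lemma mrpow_herm (r : ℝ) : (mrpow A r).IsHermitian := by
  have : IsSelfAdjoint (cfc (fun x : ℝ => x ^ r) A) := cfc_predicate _ _
  exact this

lemma mrpow_mul_mrpow (h : ∀ x ∈ spectrum ℝ A, 0 < x) (r s : ℝ) :
    mrpow A r * mrpow A s = mrpow A (r + s) := by
  unfold mrpow
  rw [← cfc_mul _ _ A (contOn h r) (contOn h s)]
  exact cfc_congr fun x hx => (Real.rpow_add (h x hx) r s).symm

lemma mrpow_one (hA : IsSelfAdjoint A) : mrpow A 1 = A := by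
  unfold mrpow
  rw [show (fun x : ℝ => x ^ (1 : ℝ)) = id from funext Real.rpow_one]
  exact cfc_id ℝ A

lemma mrpow_zero (hA : IsSelfAdjoint A) : mrpow A 0 = 1 := by
  unfold mrpow
  rw [show (fun x : ℝ => x ^ (0 : ℝ)) = (1 : ℝ → ℝ) from funext Real.rpow_zero]
  exact cfc_one ℝ A

lemma scalar_key {x a b t : ℝ} (hx : 1 ≤ x) (ha : 0 < a) (hb : 0 < b)
    (ht0 : 0 ≤ t) (ht1 : t ≤ 1) (hc0 : 0 < (1 - t) * a + t * b) :
    ((1 - t) * a + t * b)⁻¹ * (x ^ ((1 - t) * a + t * b) - 1) ≤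
      (1 - t) * (a⁻¹ * (x ^ a - 1)) + t * (b⁻¹ * (x ^ b - 1)) := by
  set c := (1 - t) * a + t * b with hc
  have key : ∀ s : ℝ, 0 < s → s⁻¹ * (x ^ s - 1) = ∫ y in (1:ℝ)..x, y ^ (s - 1) := by
    intro s hs
    rw [integral_rpow (Or.inl (by linarith)), sub_add_cancel, Real.one_rpow]
    field_simp
  have hInt : ∀ s : ℝ, 0 < s →
      IntervalIntegrable (fun y : ℝ => y ^ (s - 1)) MeasureTheory.volume 1 x :=
    fun s hs => intervalIntegral.intervalIntegrable_rpow' (by linarith)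
  rw [key _ hc0, key _ ha, key _ hb]
  calc (∫ y in (1:ℝ)..x, y ^ (c - 1))
      ≤ ∫ y in (1:ℝ)..x, ((1 - t) * y ^ (a - 1) + t * y ^ (b - 1)) := by
        refine intervalIntegral.integral_mono_on hx (hInt c hc0)
          (((hInt a ha).const_mul _).add ((hInt b hb).const_mul _)) ?_
        intro y hy
        have hy0 : (0:ℝ) < y := lt_of_lt_of_le one_pos hy.1
        have hgm := Real.geom_mean_le_arith_mean2_weighted (sub_nonneg.2 ht1) ht0
          (Real.rpow_nonneg hy0.le (a - 1)) (Real.rpow_nonneg hy0.le (b - 1))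
          (by ring)
        calc y ^ (c - 1)
            = (y ^ (a - 1)) ^ (1 - t) * (y ^ (b - 1)) ^ t := by
              rw [← Real.rpow_mul hy0.le, ← Real.rpow_mul hy0.le, ← Real.rpow_add hy0]
              congr 1
              rw [hc]; ring
          _ ≤ _ := hgm
    _ = (1 - t) * (∫ y in (1:ℝ)..x, y ^ (a - 1)) + t * ∫ y in (1:ℝ)..x, y ^ (b - 1) := by
        rw [intervalIntegral.integral_add ((hInt a ha).const_mul _) ((hInt b hb).const_mul _),
          intervalIntegral.integral_const_mul, intervalIntegral.integral_const_mul]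

end Stmt15Aux

open Stmt15Aux

/-- For positive definite `A ≤ B`, `a, b ∈ (0,1]` and `t ∈ [0,1]`,
in the Loewner order: `T_{(1-t)a+tb}(A|B) ≤ (1-t)T_a(A|B) + tT_b(A|B)`. -/
theorem stmt15 (n : ℕ) (A B : Matrix (Fin n) (Fin n) ℂ) (hA : A.PosDef) (hB : B.PosDef)
    (hAB : (B - A).PosSemidef)
    (a b : ℝ) (ha : a ∈ Set.Ioc (0 : ℝ) 1) (hb : b ∈ Set.Ioc (0 : ℝ) 1)
    (t : ℝ) (ht : t ∈ Set.Icc (0 : ℝ) 1) :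
    ((1 - t) • tsallis A B a + t • tsallis A B b -
      tsallis A B ((1 - t) * a + t * b)).PosSemidef := by
  obtain ⟨ha0, ha1⟩ := ha
  obtain ⟨hb0, hb1⟩ := hb
  obtain ⟨ht0, ht1⟩ := ht
  set c := (1 - t) * a + t * b with hcdef
  have hc0 : 0 < c := by
    rcases eq_or_lt_of_le ht0 with h | h
    · rw [hcdef, ← h]; simpa using ha0
    · have : 0 ≤ (1 - t) * a := mul_nonneg (by linarith) ha0.le
      have : 0 < t * b := mul_pos h hb0
      rw [hcdef]; linarith
  have hAsa : IsSelfAdjoint A := hA.1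
  have hApos := spectrum_pos hA
  set S := mrpow A (1 / 2) with hSdef
  set T := mrpow A (-(1 / 2)) with hTdef
  have hS : S.IsHermitian := mrpow_herm _
  have hT : T.IsHermitian := mrpow_herm _
  have hTS : T * S = 1 := by
    rw [hTdef, hSdef, mrpow_mul_mrpow hApos,
      show (-(1 / 2) + 1 / 2 : ℝ) = 0 by ring, mrpow_zero hAsa]
  have hST : S * T = 1 := by
    rw [hTdef, hSdef, mrpow_mul_mrpow hApos,
      show (1 / 2 + -(1 / 2) : ℝ) = 0 by ring, mrpow_zero hAsa]
  have hSS : S * S = A := by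
    rw [hSdef, mrpow_mul_mrpow hApos, show (1 / 2 + 1 / 2 : ℝ) = 1 by ring, mrpow_one hAsa]
  set C := T * B * T with hCdef
  have hCpsd : C.PosSemidef := by
    have h := hB.posSemidef.mul_mul_conjTranspose_same T
    rwa [hT] at h
  have hCh : C.IsHermitian := hCpsd.1
  have hCsa : IsSelfAdjoint C := hCh
  have hTAT : T * A * T = 1 := by
    rw [← hSS, ← mul_assoc, mul_assoc (T * S) S T, hTS, hST, one_mul]
  have hC1 : (C - 1).PosSemidef := by
    have h := hAB.mul_mul_conjTranspose_same T
    rw [hT] at h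
    have he : T * (B - A) * T = C - 1 := by
      rw [Matrix.mul_sub, Matrix.sub_mul, hTAT, hCdef]
    rwa [he] at h
  have hCone := one_le_spectrum hC1
  have hCpos : ∀ x ∈ spectrum ℝ C, 0 < x := fun x hx =>
    lt_of_lt_of_le one_pos (hCone x hx)
  set F : ℝ → ℝ → ℝ := fun s x => s⁻¹ * (x ^ s - 1) with hFdef
  have hFcont : ∀ s : ℝ, ContinuousOn (F s) (spectrum ℝ C) :=
    fun s => continuousOn_const.mul ((contOn hCpos s).sub continuousOn_const)
  have hts : ∀ s : ℝ, tsallis A B s = S * cfc (F s) C * S := by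
    intro s
    have h1 : cfc (F s) C = s⁻¹ • (mrpow C s - 1) := by
      rw [hFdef]
      rw [cfc_const_mul s⁻¹ (fun x : ℝ => x ^ s - 1) C ((contOn hCpos s).sub continuousOn_const)]
      rw [cfc_sub (fun x : ℝ => x ^ s) (fun _ : ℝ => (1 : ℝ)) C (contOn hCpos s)
        continuousOn_const]
      rw [show cfc (fun _ : ℝ => (1 : ℝ)) C = 1 from cfc_one ℝ C hCsa]
      rfl
    rw [h1]
    unfold tsallis geomMean
    rw [← hSdef, ← hTdef, ← hCdef]
    rw [mul_smul_comm, smul_mul_assoc, Matrix.mul_sub, Matrix.sub_mul, Matrix.mul_one, hSS]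
  have hg : cfc (fun x : ℝ => (1 - t) * F a x + t * F b x - F c x) C
      = (1 - t) • cfc (F a) C + t • cfc (F b) C - cfc (F c) C := by
    rw [cfc_sub (fun x : ℝ => (1 - t) * F a x + t * F b x) (F c) C
        ((continuousOn_const.mul (hFcont a)).add (continuousOn_const.mul (hFcont b)))
        (hFcont c),
      cfc_add C (fun x : ℝ => (1 - t) * F a x) (fun x : ℝ => t * F b x)
        (continuousOn_const.mul (hFcont a)) (continuousOn_const.mul (hFcont b)),
      cfc_const_mul _ _ C (hFcont a), cfc_const_mul _ _ C (hFcont b)]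
  have hgpos : ∀ x ∈ spectrum ℝ C, 0 ≤ (1 - t) * F a x + t * F b x - F c x := by
    intro x hx
    have h1x := hCone x hx
    have := scalar_key h1x ha0 hb0 ht0 ht1 (hcdef ▸ hc0)
    rw [hFdef]
    simp only []
    rw [hcdef]
    linarith
  have hpsd := (cfc_posSemidef hCh _ hgpos).mul_mul_conjTranspose_same S
  rw [hS, hg] at hpsd
  have hfinal : (1 - t) • tsallis A B a + t • tsallis A B b - tsallis A B c
      = S * ((1 - t) • cfc (F a) C + t • cfc (F b) C - cfc (F c) C) * S := by
    rw [hts a, hts b, hts c]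
    simp only [Matrix.mul_add, Matrix.add_mul, Matrix.mul_sub, Matrix.sub_mul,
      mul_smul_comm, smul_mul_assoc]
  rwa [hfinal]
end

section
/- Let A, B be positive definite n×n complex matrices. If 0 < t ≤ s ≤ 1, then T_t(A|B) ≤ T_s(A|B) in the Loewner order; that is, the map s ↦ T_s(A|B) is monotonically increasing on (0, 1]. -/
open Matrix ComplexOrder

/- Auxiliary lemmas. -/

/-- Every real function is continuous on the (finite) real spectrum of a matrix. -/
lemma contOnSpec {n : ℕ} (f : ℝ → ℝ) (M : Matrix (Fin n) (Fin n) ℂ) :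
    ContinuousOn f (spectrum ℝ M) :=
  (Matrix.finite_real_spectrum (A := M)).continuousOn f

lemma spec_nonneg_of_psd {n : ℕ} {M : Matrix (Fin n) (Fin n) ℂ} (hM : M.PosSemidef)
    {x : ℝ} (hx : x ∈ spectrum ℝ M) : 0 ≤ x := by
  rw [hM.1.spectrum_real_eq_range_eigenvalues] at hx
  obtain ⟨i, rfl⟩ := hx
  exact hM.eigenvalues_nonneg i

lemma spec_pos_of_pd {n : ℕ} {M : Matrix (Fin n) (Fin n) ℂ} (hM : M.PosDef)
    {x : ℝ} (hx : x ∈ spectrum ℝ M) : 0 < x := by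
  rw [hM.1.spectrum_real_eq_range_eigenvalues] at hx
  obtain ⟨i, rfl⟩ := hx
  exact hM.eigenvalues_pos i

/-- `cfc` of a function nonnegative on the spectrum of a Hermitian matrix is PSD. -/
lemma cfc_posSemidef {n : ℕ} {M : Matrix (Fin n) (Fin n) ℂ} (hM : M.IsHermitian)
    (f : ℝ → ℝ) (hf : ∀ x ∈ spectrum ℝ M, 0 ≤ f x) : (cfc f M).PosSemidef := by
  rw [hM.cfc_eq f]
  unfold Matrix.IsHermitian.cfc
  rw [Unitary.conjStarAlgAut_apply, star_eq_conjTranspose]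
  refine Matrix.PosSemidef.mul_mul_conjTranspose_same (Matrix.PosSemidef.diagonal ?_) _
  intro i
  simp only [Pi.zero_apply, Function.comp_apply]
  exact Complex.zero_le_real.mpr (hf _ (hM.eigenvalues_mem_spectrum_real i))

lemma mrpow_isHermitian {n : ℕ} (M : Matrix (Fin n) (Fin n) ℂ) (r : ℝ) :
    (mrpow M r).IsHermitian :=
  cfc_predicate (fun x : ℝ => x ^ r) M

/-- For a positive definite `A`, `A^{1/2} A^{1/2} = A`. -/
lemma mrpow_half_mul_half {n : ℕ} {A : Matrix (Fin n) (Fin n) ℂ} (hA : A.PosDef) :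
    mrpow A (1 / 2) * mrpow A (1 / 2) = A := by
  unfold mrpow
  rw [← cfc_mul _ _ A (contOnSpec _ A) (contOnSpec _ A)]
  have : cfc (fun x : ℝ => x ^ (1 / 2 : ℝ) * x ^ (1 / 2 : ℝ)) A = cfc (fun x : ℝ => x) A := by
    apply cfc_congr
    intro x hx
    have hx' : (0 : ℝ) < x := spec_pos_of_pd hA hx
    show x ^ (1 / 2 : ℝ) * x ^ (1 / 2 : ℝ) = x
    rw [← Real.rpow_add hx']
    norm_num
  rw [this, cfc_id' ℝ A hA.1.isSelfAdjoint]

/-- The scalar inequality underlying monotonicity of the Tsallis entropy. -/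
lemma scalar_mono {t s : ℝ} (ht : 0 < t) (hts : t ≤ s) (hs : s ≤ 1) {x : ℝ} (hx : 0 ≤ x) :
    t⁻¹ * (x ^ t - 1) ≤ s⁻¹ * (x ^ s - 1) := by
  have hs0 : (0 : ℝ) < s := lt_of_lt_of_le ht hts
  set y : ℝ := x ^ s with hy
  have hy0 : 0 ≤ y := Real.rpow_nonneg hx s
  have hr0 : 0 ≤ t / s := div_nonneg ht.le hs0.le
  have hr1 : t / s ≤ 1 := (div_le_one hs0).mpr hts
  have hbern : (1 + (y - 1)) ^ (t / s) ≤ 1 + (t / s) * (y - 1) :=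
    rpow_one_add_le_one_add_mul_self (by linarith) hr0 hr1
  have hxy : x ^ t = y ^ (t / s) := by
    rw [hy, ← Real.rpow_mul hx]
    congr 1
    field_simp
  have h1 : x ^ t ≤ 1 + (t / s) * (y - 1) := by
    rw [hxy]
    calc y ^ (t / s) = (1 + (y - 1)) ^ (t / s) := by ring_nf
    _ ≤ 1 + (t / s) * (y - 1) := hbern
  have h2 : x ^ t - 1 ≤ (t / s) * (x ^ s - 1) := by
    rw [← hy]; linarith
  have h3 : t⁻¹ * (x ^ t - 1) ≤ t⁻¹ * ((t / s) * (x ^ s - 1)) :=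
    mul_le_mul_of_nonneg_left h2 (inv_nonneg.mpr ht.le)
  calc t⁻¹ * (x ^ t - 1) ≤ t⁻¹ * ((t / s) * (x ^ s - 1)) := h3
  _ = s⁻¹ * (x ^ s - 1) := by field_simp

/-- For positive definite `A, B` and `0 < t ≤ s ≤ 1`, in the Loewner
order `T_t(A|B) ≤ T_s(A|B)`: the map `s ↦ T_s(A|B)` is monotone on `(0, 1]`. -/
theorem stmt19 (n : ℕ) (A B : Matrix (Fin n) (Fin n) ℂ) (hA : A.PosDef) (hB : B.PosDef)
    (t s : ℝ) (ht : 0 < t) (hts : t ≤ s) (hs : s ≤ 1) :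
    (tsallis A B s - tsallis A B t).PosSemidef := by
  set R : Matrix (Fin n) (Fin n) ℂ := mrpow A (1 / 2) with hR
  set X : Matrix (Fin n) (Fin n) ℂ := mrpow A (-(1 / 2)) with hX
  set C : Matrix (Fin n) (Fin n) ℂ := X * B * X with hC
  have hXh : X.IsHermitian := mrpow_isHermitian A _
  have hRh : R.IsHermitian := mrpow_isHermitian A _
  have hCpsd : C.PosSemidef := by
    have := hB.posSemidef.mul_mul_conjTranspose_same X
    rwa [hXh.eq] at this
  have hCh : IsSelfAdjoint C := hCpsd.1.isSelfAdjoint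
  have hRR : R * R = A := mrpow_half_mul_half hA
  -- the scalar function
  set f : ℝ → ℝ := fun x => s⁻¹ • (x ^ s - 1) - t⁻¹ • (x ^ t - 1) with hf
  -- cfc f C equals the combination of matrix powers
  have hCs : cfc (fun x : ℝ => x ^ s - 1) C = mrpow C s - 1 := by
    rw [cfc_sub _ _ C (contOnSpec _ C) (contOnSpec _ C), cfc_const_one ℝ C hCh]
    rfl
  have hCt : cfc (fun x : ℝ => x ^ t - 1) C = mrpow C t - 1 := by
    rw [cfc_sub _ _ C (contOnSpec _ C) (contOnSpec _ C), cfc_const_one ℝ C hCh]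
    rfl
  have hD : cfc f C = s⁻¹ • (mrpow C s - 1) - t⁻¹ • (mrpow C t - 1) := by
    rw [hf, cfc_sub _ _ C (contOnSpec _ C) (contOnSpec _ C),
      cfc_smul s⁻¹ _ C (contOnSpec _ C), cfc_smul t⁻¹ _ C (contOnSpec _ C), hCs, hCt]
  -- nonnegativity of f on the spectrum of C
  have hfpos : ∀ x ∈ spectrum ℝ C, 0 ≤ f x := by
    intro x hx
    have hx0 : (0 : ℝ) ≤ x := spec_nonneg_of_psd hCpsd hx
    have := scalar_mono ht hts hs hx0
    simp only [hf, smul_eq_mul]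
    linarith
  have hDpsd : (cfc f C).PosSemidef := cfc_posSemidef hCpsd.1 f hfpos
  -- the main identity
  have key : tsallis A B s - tsallis A B t = R * cfc f C * R := by
    rw [hD]
    have expand : R * (s⁻¹ • (mrpow C s - 1) - t⁻¹ • (mrpow C t - 1)) * R
        = s⁻¹ • (R * mrpow C s * R - R * R) - t⁻¹ • (R * mrpow C t * R - R * R) := by
      simp only [mul_sub, sub_mul, smul_sub, mul_smul_comm, smul_mul_assoc, mul_one, one_mul]
    rw [expand, hRR]
    simp only [tsallis, geomMean, ← hR, ← hX, ← hC]
  rw [key]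
  have := hDpsd.mul_mul_conjTranspose_same R
  rwa [hRh.eq] at this
end
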